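/- Let F ⊆ R⟨X⟩ be a set of polynomials, DM a function selecting divisor monomials (DM(g) ⊆ supp(g) for each g ∈ F), and f ∈ R⟨X⟩ a polynomial such that f →*_{F,DM} 0. Then, for all labelled quivers Q with labels in X such that f, every element of F, and DM are compatible with Q, and for all representations of Q consistent with its labelling in which all realizations of all elements of F are the zero map, all realizations of f are the zero map (i.e., φ_{u,v}(f) = 0 for every (u,v) ∈ σ(f)). -/

import Mathlib

open scoped BigOperators

universe u₁ u₂ u₃ u₄ u₅

/-- A labelled quiver: a directed multigraph with edges labelled in `X`. -/
structure LQuiver (V : Type u₁) (E : Type u₂) (X : Type u₃) where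
  src : E → V
  tgt : E → V
  lab : E → X

namespace LQuiver

variable {V : Type u₁} {E : Type u₂} {X : Type u₃}

/-- Paths in the quiver (possibly empty). -/
inductive Walk (Q : LQuiver V E X) : V → V → Type (max u₁ u₂)
  | nil (v : V) : Walk Q v v
  | cons {u : V} (e : E) (p : Walk Q u (Q.src e)) : Walk Q u (Q.tgt e)

/-- The label of a path, a word in the free monoid `⟨X⟩`. -/
def wlabel (Q : LQuiver V E X) : ∀ {u v : V}, Q.Walk u v → FreeMonoid X
  | _, _, .nil _ => 1
  | _, _, .cons e p => FreeMonoid.of (Q.lab e) * Q.wlabel p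

/-- The signature `σ(m)` of a monomial (word) `m`. -/
def sigW (Q : LQuiver V E X) (m : FreeMonoid X) : Set (V × V) :=
  {p : V × V | ∃ w : Q.Walk p.1 p.2, Q.wlabel w = m}

variable {R : Type u₄} [CommRing R]

/-- The signature `σ(f)` of a noncommutative polynomial `f ∈ R⟨X⟩`. -/
def sig (Q : LQuiver V E X) (f : MonoidAlgebra R (FreeMonoid X)) : Set (V × V) :=
  ⋂ m ∈ f.coeff.support, Q.sigW m

/-- A polynomial is compatible with `Q` if its signature is nonempty. -/
def Compatible (Q : LQuiver V E X) (f : MonoidAlgebra R (FreeMonoid X)) : Prop :=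
  (Q.sig f).Nonempty

/-- The projection `s(f)` of `σ(f)` on sources. -/
def srcSet (Q : LQuiver V E X) (f : MonoidAlgebra R (FreeMonoid X)) : Set V :=
  Prod.fst '' Q.sig f

/-- The projection `t(f)` of `σ(f)` on targets. -/
def tgtSet (Q : LQuiver V E X) (f : MonoidAlgebra R (FreeMonoid X)) : Set V :=
  Prod.snd '' Q.sig f

/-- `f` is a `Q`-consequence of `F`. -/
def QConsequence (Q : LQuiver V E X) (F : Set (MonoidAlgebra R (FreeMonoid X)))
    (f : MonoidAlgebra R (FreeMonoid X)) : Prop :=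
  Q.Compatible f ∧
  ∃ (n : ℕ) (g a b : Fin n → MonoidAlgebra R (FreeMonoid X)),
    (∀ i, g i ∈ F) ∧
    f = ∑ i, a i * g i * b i ∧
    ∀ uv ∈ Q.sig f, ∀ i, ∃ ui vi : V,
      (uv.1, ui) ∈ Q.sig (b i) ∧ (ui, vi) ∈ Q.sig (g i) ∧ (vi, uv.2) ∈ Q.sig (a i)

end LQuiver

/-- The monomial `m` regarded as a polynomial in `R⟨X⟩`. -/
noncomputable def mono (R : Type u₄) [CommRing R] {X : Type u₃} (m : FreeMonoid X) :
    MonoidAlgebra R (FreeMonoid X) :=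
  MonoidAlgebra.single m 1

/-- One rewriting step with divisor monomials selected by `DM`. -/
def RewriteStep {R : Type u₄} [CommRing R] {X : Type u₃}
    (G : Set (MonoidAlgebra R (FreeMonoid X)))
    (DM : MonoidAlgebra R (FreeMonoid X) → Set (FreeMonoid X))
    (f h : MonoidAlgebra R (FreeMonoid X)) : Prop :=
  ∃ g ∈ G, ∃ m ∈ DM g, ∃ a b : FreeMonoid X, ∃ lam : R,
    a * m * b ∈ f.coeff.support ∧ h = f + lam • (mono R a * g * mono R b)

/-- A monomial order: a well-founded linear order compatible with multiplication. -/
def IsMonomialOrder {X : Type u₃} (ord : LinearOrder (FreeMonoid X)) : Prop :=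
  WellFounded ord.lt ∧
    ∀ a b m m' : FreeMonoid X, ord.le m m' → ord.le (a * m * b) (a * m' * b)

/-- The leading monomial of a polynomial w.r.t. a linear order on monomials
(defined as `1` for the zero polynomial). -/
noncomputable def LM {K : Type u₄} [CommRing K] {X : Type u₃}
    (ord : LinearOrder (FreeMonoid X)) (f : MonoidAlgebra K (FreeMonoid X)) : FreeMonoid X :=
  letI := ord
  letI : Decidable (f = 0) := Classical.dec _
  if h : f = 0 then 1 else f.coeff.support.max'
    (Finsupp.support_nonempty_iff.mpr (fun h' => h (MonoidAlgebra.coeff_eq_zero.mp h')))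

/-- One step of standard polynomial reduction w.r.t. a set `G` and a monomial order. -/
def ReduceStep {K : Type u₄} [Field K] {X : Type u₃} (ord : LinearOrder (FreeMonoid X))
    (G : Set (MonoidAlgebra K (FreeMonoid X)))
    (f h : MonoidAlgebra K (FreeMonoid X)) : Prop :=
  ∃ g ∈ G, g ≠ 0 ∧ ∃ a b : FreeMonoid X,
    a * LM ord g * b ∈ f.coeff.support ∧
    h = f - (f.coeff (a * LM ord g * b) / g.coeff (LM ord g)) • (mono K a * g * mono K b)

/-- `f` is `Q`-order compatible w.r.t. the order `ord`. -/
def QOrderCompatible {V : Type u₁} {E : Type u₂} {X : Type u₃} {K : Type u₄} [CommRing K]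
    (Q : LQuiver V E X) (ord : LinearOrder (FreeMonoid X))
    (f : MonoidAlgebra K (FreeMonoid X)) : Prop :=
  Q.Compatible f ∧ Q.sigW (LM ord f) = Q.sig f

/-- A representation of a labelled quiver. -/
structure QRep (R : Type u₄) [CommRing R] {V : Type u₁} {E : Type u₂} {X : Type u₃}
    (Q : LQuiver V E X) where
  M : V → Type u₅
  [addcg : ∀ v, AddCommGroup (M v)]
  [mod : ∀ v, Module R (M v)]
  φ : (e : E) → M (Q.src e) →ₗ[R] M (Q.tgt e)

attribute [instance] QRep.addcg QRep.mod

namespace QRep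

variable {R : Type u₄} [CommRing R] {V : Type u₁} {E : Type u₂} {X : Type u₃}
  {Q : LQuiver V E X}

/-- The linear map induced by a path. -/
def walkMap (ρ : QRep R Q) : ∀ {u v : V}, Q.Walk u v → (ρ.M u →ₗ[R] ρ.M v)
  | _, _, .nil _ => LinearMap.id
  | _, _, .cons e p => (ρ.φ e).comp (ρ.walkMap p)

/-- The representation is consistent with the labelling: two paths with the same
source, target and label induce the same linear map. -/
def Consistent (ρ : QRep R Q) : Prop :=
  ∀ (u v : V) (p q : Q.Walk u v), Q.wlabel p = Q.wlabel q → ρ.walkMap p = ρ.walkMap q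

/-- The realization `φ_{v,w}(f)` of a polynomial `f` (for a consistent representation and
`(v,w) ∈ σ(f)`, this is the well-defined linear map of the paper). -/
noncomputable def real (ρ : QRep R Q) (v w : V) (f : MonoidAlgebra R (FreeMonoid X)) :
    ρ.M v →ₗ[R] ρ.M w :=
  ∑ m ∈ f.coeff.support, f.coeff m •
    (letI : Decidable (∃ p : Q.Walk v w, Q.wlabel p = m) := Classical.dec _
     if h : ∃ p : Q.Walk v w, Q.wlabel p = m then ρ.walkMap h.choose else 0)

end QRep

section Auxiliary

variable {V : Type u₁} {E : Type u₂} {X : Type u₃} {R : Type u₄} [CommRing R]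
  {Q : LQuiver V E X}

namespace LQuiver

/-- Composition of walks. -/
def Walk.comp {u : V} : ∀ {w v : V}, Q.Walk u w → Q.Walk w v → Q.Walk u v
  | _, _, p, .nil _ => p
  | _, _, p, .cons e q => .cons e (p.comp q)

lemma wlabel_comp {u : V} : ∀ {w v : V} (p : Q.Walk u w) (q : Q.Walk w v),
    Q.wlabel (p.comp q) = Q.wlabel q * Q.wlabel p
  | _, _, p, .nil _ => by simp [Walk.comp, wlabel]
  | _, _, p, .cons e q => by
      simp only [Walk.comp, wlabel, wlabel_comp p q, mul_assoc]

/-- Splitting a walk according to a factorization of its label. -/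
lemma exists_split : ∀ {u v : V} (w : Q.Walk u v) (x y : FreeMonoid X),
    Q.wlabel w = x * y →
    ∃ (z : V) (p : Q.Walk u z) (q : Q.Walk z v), Q.wlabel p = y ∧ Q.wlabel q = x
  | _, _, .nil v, x, y, h => by
      have hx : x = 1 ∧ y = 1 := by
        have := congrArg FreeMonoid.toList h
        simp only [wlabel, FreeMonoid.toList_mul, FreeMonoid.toList_one] at this
        rcases List.append_eq_nil_iff.mp this.symm with ⟨h1, h2⟩
        exact ⟨FreeMonoid.toList.injective (by simp [h1]),
          FreeMonoid.toList.injective (by simp [h2])⟩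
      exact ⟨v, .nil v, .nil v, by simp [wlabel, hx.1, hx.2]⟩
  | _, _, .cons e w, x, y, h => by
      simp only [wlabel] at h
      rcases hx : FreeMonoid.toList x with _ | ⟨c, tx⟩
      · -- x = 1
        have hx1 : x = 1 := FreeMonoid.toList.injective (by simp [hx])
        subst hx1
        rw [one_mul] at h
        exact ⟨_, .cons e w, .nil _, by simp only [wlabel]; exact h, by simp [wlabel]⟩
      · -- x = of c * x'
        set x' : FreeMonoid X := FreeMonoid.ofList tx with hx'
        have hxeq : x = FreeMonoid.of c * x' := by
          apply FreeMonoid.toList.injective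
          simp [hx, hx']
        have h2 : FreeMonoid.of (Q.lab e) * Q.wlabel w
            = FreeMonoid.of c * (x' * y) := by
          rw [← mul_assoc, ← hxeq]; exact h
        have hlist := congrArg FreeMonoid.toList h2
        simp only [FreeMonoid.toList_mul, FreeMonoid.toList_of, List.cons_append,
          List.nil_append] at hlist
        have hc : Q.lab e = c := (List.cons.injEq _ _ _ _ ▸ hlist).1
        have hw : Q.wlabel w = x' * y := by
          apply FreeMonoid.toList.injective
          simpa [FreeMonoid.toList_mul] using (List.cons.injEq _ _ _ _ ▸ hlist).2
        obtain ⟨z, p, q, hp, hq⟩ := exists_split w x' y hw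
        refine ⟨z, p, .cons e q, hp, ?_⟩
        simp [wlabel, hq, hxeq, hc]

lemma mem_sig_iff {f : MonoidAlgebra R (FreeMonoid X)} {uv : V × V} :
    uv ∈ Q.sig f ↔ ∀ m ∈ f.coeff.support, uv ∈ Q.sigW m := Set.mem_iInter₂

lemma mem_sigW_iff {m : FreeMonoid X} {uv : V × V} :
    uv ∈ Q.sigW m ↔ ∃ w : Q.Walk uv.1 uv.2, Q.wlabel w = m := Iff.rfl

end LQuiver

namespace QRep

lemma walkMap_comp (ρ : QRep R Q) {u : V} :
    ∀ {w v : V} (p : Q.Walk u w) (q : Q.Walk w v),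
    ρ.walkMap (p.comp q) = (ρ.walkMap q).comp (ρ.walkMap p)
  | _, _, p, .nil _ => by simp [LQuiver.Walk.comp, walkMap]
  | _, _, p, .cons e q => by
      simp [LQuiver.Walk.comp, walkMap, walkMap_comp ρ p q, LinearMap.comp_assoc]

/-- The basic building block of realization maps. -/
noncomputable def walkT (ρ : QRep R Q) (v w : V) (m : FreeMonoid X) :
    ρ.M v →ₗ[R] ρ.M w :=
  letI : Decidable (∃ p : Q.Walk v w, Q.wlabel p = m) := Classical.dec _
  if h : ∃ p : Q.Walk v w, Q.wlabel p = m then ρ.walkMap h.choose else 0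

lemma walkT_eq (ρ : QRep R Q) (hcons : ρ.Consistent) {v w : V} {m : FreeMonoid X}
    (p : Q.Walk v w) (hp : Q.wlabel p = m) : ρ.walkT v w m = ρ.walkMap p := by
  rw [walkT]
  have h : ∃ q : Q.Walk v w, Q.wlabel q = m := ⟨p, hp⟩
  rw [dif_pos h]
  exact hcons v w _ p (h.choose_spec.trans hp.symm)

lemma real_eq_linearCombination (ρ : QRep R Q) (v w : V)
    (f : MonoidAlgebra R (FreeMonoid X)) :
    ρ.real v w f = Finsupp.linearCombination R (ρ.walkT v w) f.coeff := by
  rw [real, Finsupp.linearCombination_apply, Finsupp.sum]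
  rfl

lemma real_zero (ρ : QRep R Q) (v w : V) :
    ρ.real v w (0 : MonoidAlgebra R (FreeMonoid X)) = 0 := by
  rw [real_eq_linearCombination]; simp

lemma real_add (ρ : QRep R Q) (v w : V) (f g : MonoidAlgebra R (FreeMonoid X)) :
    ρ.real v w (f + g) = ρ.real v w f + ρ.real v w g := by
  simp [real_eq_linearCombination, MonoidAlgebra.coeff_add, MonoidAlgebra.coeff_smul]

lemma real_smul (ρ : QRep R Q) (v w : V) (c : R) (f : MonoidAlgebra R (FreeMonoid X)) :
    ρ.real v w (c • f) = c • ρ.real v w f := by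
  simp [real_eq_linearCombination, MonoidAlgebra.coeff_add, MonoidAlgebra.coeff_smul]

lemma mono_mul_expand (a b : FreeMonoid X) (g : MonoidAlgebra R (FreeMonoid X)) :
    mono R a * g * mono R b
      = ∑ m ∈ g.coeff.support, MonoidAlgebra.single (a * m * b) (g.coeff m) := by
  conv_lhs => rw [← MonoidAlgebra.sum_coeff_single g, Finsupp.sum]
  rw [Finset.mul_sum, Finset.sum_mul]
  refine Finset.sum_congr rfl fun m _ => ?_
  simp only [mono]
  rw [MonoidAlgebra.single_mul_single, MonoidAlgebra.single_mul_single, one_mul, mul_one]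

lemma lcomp_sum {M₁ M₂ M₃ : Type*} [AddCommMonoid M₁] [AddCommMonoid M₂]
    [AddCommMonoid M₃] [Module R M₁] [Module R M₂] [Module R M₃]
    {ι : Type*} (s : Finset ι) (g : M₂ →ₗ[R] M₃) (f : ι → M₁ →ₗ[R] M₂) :
    g ∘ₗ (∑ i ∈ s, f i) = ∑ i ∈ s, g ∘ₗ f i := by
  ext x; simp [LinearMap.sum_apply]

lemma lsum_comp {M₁ M₂ M₃ : Type*} [AddCommMonoid M₁] [AddCommMonoid M₂]
    [AddCommMonoid M₃] [Module R M₁] [Module R M₂] [Module R M₃]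
    {ι : Type*} (s : Finset ι) (f : ι → M₂ →ₗ[R] M₃) (g : M₁ →ₗ[R] M₂) :
    (∑ i ∈ s, f i) ∘ₗ g = ∑ i ∈ s, f i ∘ₗ g := by
  ext x; simp [LinearMap.sum_apply]

lemma real_conj (ρ : QRep R Q) (hcons : ρ.Consistent) {u u₁ v₁ v : V}
    (pb : Q.Walk u u₁) (pa : Q.Walk v₁ v) {a b : FreeMonoid X}
    (ha : Q.wlabel pa = a) (hb : Q.wlabel pb = b)
    (g : MonoidAlgebra R (FreeMonoid X))
    (hg : ∀ m ∈ g.coeff.support, ∃ p : Q.Walk u₁ v₁, Q.wlabel p = m) :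
    ρ.real u v (mono R a * g * mono R b)
      = (ρ.walkMap pa) ∘ₗ (ρ.real u₁ v₁ g) ∘ₗ (ρ.walkMap pb) := by
  classical
  rw [QRep.mono_mul_expand, real_eq_linearCombination, MonoidAlgebra.coeff_sum, map_sum,
    real_eq_linearCombination, Finsupp.linearCombination_apply, Finsupp.sum,
    QRep.lsum_comp, QRep.lcomp_sum]
  refine Finset.sum_congr rfl fun m hm => ?_
  obtain ⟨pm, hpm⟩ := hg m hm
  rw [MonoidAlgebra.coeff_single, Finsupp.linearCombination_single,
    walkT_eq ρ hcons ((pb.comp pm).comp pa)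
      (by rw [LQuiver.wlabel_comp, LQuiver.wlabel_comp, ha, hpm, hb, mul_assoc]),
    walkT_eq ρ hcons pm hpm,
    walkMap_comp, walkMap_comp, LinearMap.smul_comp, LinearMap.comp_smul]

end QRep

end Auxiliary

/-- if `f →*_{F,DM} 0`, then for every quiver with which `f`, `F` and `DM`
are compatible and every consistent representation annihilating `F`, all realizations of
`f` vanish. -/
theorem prove_identities {X R : Type*} [CommRing R]
    (F : Set (MonoidAlgebra R (FreeMonoid X)))
    (DM : MonoidAlgebra R (FreeMonoid X) → Set (FreeMonoid X))
    (hDM : ∀ g ∈ F, DM g ⊆ (g.coeff.support : Set (FreeMonoid X)))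
    (f : MonoidAlgebra R (FreeMonoid X))
    (hred : Relation.ReflTransGen (RewriteStep F DM) f 0) :
    ∀ {V E : Type*} (Q : LQuiver V E X),
      Q.Compatible f →
      (∀ g ∈ F, Q.Compatible g) →
      (∀ g ∈ F, ∀ m ∈ DM g, Q.sigW m = Q.sig g) →
      ∀ ρ : QRep R Q, ρ.Consistent →
        (∀ g ∈ F, ∀ uv ∈ Q.sig g, ρ.real uv.1 uv.2 g = 0) →
        ∀ uv ∈ Q.sig f, ρ.real uv.1 uv.2 f = 0 := by
  intro V E Q hfcomp hFcomp hDMsig ρ hcons hann uv huv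
  classical
  have key : ∀ f' : MonoidAlgebra R (FreeMonoid X),
      Relation.ReflTransGen (RewriteStep F DM) f' 0 →
      uv ∈ Q.sig f' → ρ.real uv.1 uv.2 f' = 0 := by
    intro f' h
    induction h using Relation.ReflTransGen.head_induction_on with
    | refl => intro _; exact ρ.real_zero uv.1 uv.2
    | @head fc cc hstep hrest ih =>
      intro ha
      obtain ⟨g, hgF, m, hmDM, a', b', lam, hsupp, hceq⟩ := hstep
      obtain ⟨w, hw⟩ := LQuiver.mem_sig_iff.mp ha _ hsupp
      obtain ⟨z₁, p₁, q₁, hp₁, hq₁⟩ :=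
        LQuiver.exists_split w a' (m * b') (hw.trans (mul_assoc _ _ _))
      obtain ⟨z₀, pb, pm, hpb, hpm⟩ := LQuiver.exists_split p₁ m b' hp₁
      have hsg : ((z₀, z₁) : V × V) ∈ Q.sig g := by
        rw [← hDMsig g hgF m hmDM]
        exact ⟨pm, hpm⟩
      have hgwalks : ∀ m' ∈ g.coeff.support, ∃ p : Q.Walk z₀ z₁, Q.wlabel p = m' :=
        fun m' hm' => LQuiver.mem_sig_iff.mp hsg m' hm'
      have h0 : ρ.real z₀ z₁ g = 0 := hann g hgF (z₀, z₁) hsg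
      have hzero : ρ.real uv.1 uv.2 (mono R a' * g * mono R b') = 0 := by
        rw [ρ.real_conj hcons pb q₁ hq₁ hpb g hgwalks, h0]
        simp
      have hcmem : uv ∈ Q.sig cc := by
        rw [LQuiver.mem_sig_iff]
        intro n hn
        rw [hceq, MonoidAlgebra.coeff_add, MonoidAlgebra.coeff_smul] at hn
        rcases Finset.mem_union.mp (Finsupp.support_add hn) with h1 | h2
        · exact LQuiver.mem_sig_iff.mp ha n h1
        · have h3 := Finsupp.support_smul h2
          rw [QRep.mono_mul_expand, MonoidAlgebra.coeff_sum] at h3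
          obtain ⟨m', hm', hn'⟩ := Finset.mem_biUnion.mp (Finsupp.support_finset_sum h3)
          have hne : n = a' * m' * b' :=
            Finset.mem_singleton.mp (Finsupp.support_single_subset (by rwa [MonoidAlgebra.coeff_single] at hn'))
          obtain ⟨pm', hpm'⟩ := hgwalks m' hm'
          refine ⟨(pb.comp pm').comp q₁, ?_⟩
          rw [LQuiver.wlabel_comp, LQuiver.wlabel_comp, hq₁, hpm', hpb, hne, mul_assoc]
      have := ih hcmem
      rw [hceq, QRep.real_add, QRep.real_smul, hzero, smul_zero, add_zero] at this
      exact this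
  exact key f hred huv
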